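/- Let Θ be a nonempty set of Borel probability measures on ℝ with sup_{μ ∈ Θ} ∫ |x|^{1+α} dμ < ∞ for some α ∈ (0,1]. Define N[φ] = sup_{μ ∈ Θ} ∫ φ dμ and p_ξ(a) = N[a·x] for a ∈ ℝ. Let φ : ℝ → ℝ be C¹ with bounded derivative whose derivative is α-Hölder with constant [φ']_α. If μ ∈ Θ attains the supremum, i.e. ∫ φ dμ = N[φ], then |∫ (x φ'(x) − p_ξ(φ'(x))) dμ(x)| ≤ 4 [φ']_α · sup_{ν ∈ Θ} ∫ |x|^{1+α} dν. -/

import Mathlib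

open Set MeasureTheory

theorem stein_estimate
    (α : ℝ) (hα : 0 < α) (hα1 : α ≤ 1)
    (Θ : Set (Measure ℝ)) (hne : Θ.Nonempty)
    (hprob : ∀ μ ∈ Θ, IsProbabilityMeasure μ)
    (hmomInt : ∀ μ ∈ Θ, Integrable (fun x => |x| ^ (1 + α)) μ)
    (hmomBdd : BddAbove ((fun μ => ∫ x, |x| ^ (1 + α) ∂μ) '' Θ))
    (φ : ℝ → ℝ) (hC1 : ContDiff ℝ 1 φ)
    (L : ℝ) (hL : 0 ≤ L)
    (hHolder : ∀ x y, |deriv φ x - deriv φ y| ≤ L * |x - y| ^ α)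
    (hφInt : ∀ μ ∈ Θ, Integrable φ μ)
    (hidInt : ∀ μ ∈ Θ, Integrable (fun x : ℝ => x) μ)
    (p : ℝ → ℝ) (hp : ∀ a, p a = sSup ((fun μ => ∫ x, a * x ∂μ) '' Θ))
    (μ : Measure ℝ) (hμ : μ ∈ Θ)
    (hattain : ∫ x, φ x ∂μ = sSup ((fun ν => ∫ x, φ x ∂ν) '' Θ))
    (hInt : Integrable (fun x => x * deriv φ x - p (deriv φ x)) μ) :
    |∫ x, (x * deriv φ x - p (deriv φ x)) ∂μ| ≤
      4 * L * sSup ((fun ν => ∫ x, |x| ^ (1 + α) ∂ν) '' Θ) := by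
  set M := sSup ((fun ν => ∫ x, |x| ^ (1 + α) ∂ν) '' Θ) with hMdef
  haveI hprobμ : IsProbabilityMeasure μ := hprob μ hμ
  have hdiff : Differentiable ℝ φ := hC1.differentiable one_ne_zero
  have hdc : Continuous (deriv φ) := hC1.continuous_deriv le_rfl
  have hαpos : (0:ℝ) < 1 + α := by linarith
  -- pointwise Taylor bound via MVT
  have taylor : ∀ x y : ℝ, |φ y - φ x - deriv φ x * (y - x)| ≤ L * |y - x| ^ (1+α) := by
    intro x y
    rcases eq_or_ne y x with rfl | hne'
    · simp [Real.zero_rpow (ne_of_gt hαpos)]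
    · have hmvt : ∃ c, |c - x| ≤ |y - x| ∧ φ y - φ x = deriv φ c * (y - x) := by
        rcases hne'.lt_or_gt with h | h
        · obtain ⟨c, hc, hceq⟩ := exists_hasDerivAt_eq_slope φ (deriv φ) h
            hdiff.continuous.continuousOn (fun z _ => (hdiff z).hasDerivAt)
          obtain ⟨hc1, hc2⟩ := hc
          refine ⟨c, ?_, ?_⟩
          · rw [abs_of_neg (by linarith : c - x < 0), abs_of_neg (by linarith : y - x < 0)]
            linarith
          · rw [eq_div_iff (sub_ne_zero.mpr (ne_of_gt h))] at hceq
            linear_combination hceq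
        · obtain ⟨c, hc, hceq⟩ := exists_hasDerivAt_eq_slope φ (deriv φ) h
            hdiff.continuous.continuousOn (fun z _ => (hdiff z).hasDerivAt)
          obtain ⟨hc1, hc2⟩ := hc
          refine ⟨c, ?_, ?_⟩
          · rw [abs_of_pos (by linarith : (0:ℝ) < c - x), abs_of_pos (by linarith : (0:ℝ) < y - x)]
            linarith
          · rw [eq_div_iff (sub_ne_zero.mpr (ne_of_gt h))] at hceq
            exact hceq.symm
      obtain ⟨c, hc1, hc2⟩ := hmvt
      have heq : φ y - φ x - deriv φ x * (y - x) = (deriv φ c - deriv φ x) * (y - x) := by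
        rw [hc2]; ring
      rw [heq, abs_mul]
      have h2 : |deriv φ c - deriv φ x| ≤ L * |c - x| ^ α := hHolder c x
      have h3 : |c - x| ^ α ≤ |y - x| ^ α := Real.rpow_le_rpow (abs_nonneg _) hc1 hα.le
      have hpos : (0:ℝ) < |y - x| := abs_pos.mpr (sub_ne_zero.mpr hne')
      have h4 : |deriv φ c - deriv φ x| * |y - x| ≤ (L * |y - x| ^ α) * |y - x| :=
        mul_le_mul_of_nonneg_right (h2.trans (mul_le_mul_of_nonneg_left h3 hL)) (abs_nonneg _)
      have h5 : L * |y - x| ^ (1+α) = (L * |y - x| ^ α) * |y - x| := by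
        rw [Real.rpow_add hpos, Real.rpow_one]; ring
      linarith
  -- |y - x|^(1+α) ≤ 2^α * (|x|^(1+α) + |y|^(1+α))
  have pow_split : ∀ x y : ℝ, |y - x| ^ (1+α) ≤ 2^α * (|x|^(1+α) + |y|^(1+α)) := by
    intro x y
    have h1 : |y - x| ^ (1+α) ≤ (|x| + |y|) ^ (1+α) := by
      refine Real.rpow_le_rpow (abs_nonneg _) ?_ hαpos.le
      calc |y - x| ≤ |y| + |x| := abs_sub _ _
        _ = |x| + |y| := by ring
    have hconv := (convexOn_rpow (show (1:ℝ) ≤ 1 + α by linarith)).2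
      (mem_Ici.mpr (abs_nonneg x)) (mem_Ici.mpr (abs_nonneg y))
      (by norm_num : (0:ℝ) ≤ 1/2) (by norm_num : (0:ℝ) ≤ 1/2) (by norm_num)
    simp only [smul_eq_mul] at hconv
    have hxy0 : (0:ℝ) ≤ 1/2*|x| + 1/2*|y| := by positivity
    have h3 : (|x| + |y|) ^ (1+α) = 2^(1+α) * (1/2*|x| + 1/2*|y|)^(1+α) := by
      rw [← Real.mul_rpow (by norm_num) hxy0]
      congr 1; ring
    have h4 : (2:ℝ)^(1+α) = 2 * 2^α := by
      rw [Real.rpow_add (by norm_num : (0:ℝ) < 2), Real.rpow_one]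
    have h5 : (2:ℝ)^(1+α) * (1/2*|x| + 1/2*|y|)^(1+α)
        ≤ 2^(1+α) * (1/2 * |x|^(1+α) + 1/2 * |y|^(1+α)) := by
      refine mul_le_mul_of_nonneg_left hconv (Real.rpow_nonneg (by norm_num) _)
    calc |y - x| ^ (1+α) ≤ (|x| + |y|) ^ (1+α) := h1
      _ = 2^(1+α) * (1/2*|x| + 1/2*|y|)^(1+α) := h3
      _ ≤ 2^(1+α) * (1/2 * |x|^(1+α) + 1/2 * |y|^(1+α)) := h5
      _ = 2^α * (|x|^(1+α) + |y|^(1+α)) := by rw [h4]; ring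
  -- moment facts
  have momle : ∀ ν ∈ Θ, ∫ x, |x|^(1+α) ∂ν ≤ M := fun ν hν => le_csSup hmomBdd ⟨ν, hν, rfl⟩
  have Mnonneg : 0 ≤ M := by
    obtain ⟨ν₀, hν₀⟩ := hne
    exact (integral_nonneg fun x => Real.rpow_nonneg (abs_nonneg x) _).trans (momle ν₀ hν₀)
  have habs : ∀ x:ℝ, |x| ≤ 1 + |x|^(1+α) := by
    intro x
    rcases le_or_gt (|x|) 1 with h | h
    · have h0 : (0:ℝ) ≤ |x|^(1+α) := Real.rpow_nonneg (abs_nonneg _) _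
      linarith
    · have h2 := Real.rpow_le_rpow_of_exponent_le h.le (show (1:ℝ) ≤ 1+α by linarith)
      rw [Real.rpow_one] at h2
      linarith
  have absInt : ∀ ν ∈ Θ, Integrable (fun x:ℝ => |x|) ν := by
    intro ν hν
    haveI := hprob ν hν
    refine Integrable.mono' ((integrable_const 1).add (hmomInt ν hν))
      continuous_abs.aestronglyMeasurable (Filter.Eventually.of_forall fun x => ?_)
    rw [Real.norm_eq_abs, abs_abs]; exact habs x
  have mbound : ∀ ν ∈ Θ, |∫ x, x ∂ν| ≤ 1 + M := by
    intro ν hν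
    haveI := hprob ν hν
    have h1 : |∫ x, x ∂ν| ≤ ∫ x, |x| ∂ν := by
      simpa [Real.norm_eq_abs] using norm_integral_le_integral_norm (μ := ν) (fun x : ℝ => x)
    have h2 : ∫ x, |x| ∂ν ≤ ∫ x, (1 + |x|^(1+α)) ∂ν :=
      integral_mono (absInt ν hν) ((integrable_const 1).add (hmomInt ν hν)) habs
    rw [integral_add (integrable_const 1) (hmomInt ν hν), integral_const] at h2
    simp only [probReal_univ, ENNReal.toReal_one, smul_eq_mul, one_mul] at h2
    linarith [momle ν hν]
  -- key lemma
  have key : ∀ ν ∈ Θ, ∀ x : ℝ,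
      |(∫ y, φ y ∂ν) - φ x - deriv φ x * ((∫ y, y ∂ν) - x)|
        ≤ L * 2^α * (|x|^(1+α) + M) := by
    intro ν hν x
    haveI := hprob ν hν
    have h2a : (0:ℝ) ≤ 2^α := Real.rpow_nonneg (by norm_num) _
    set a := deriv φ x with hadef
    have i1 : Integrable (fun y => φ y - φ x) ν := (hφInt ν hν).sub (integrable_const (φ x))
    have i2 : Integrable (fun y : ℝ => y - x) ν := (hidInt ν hν).sub (integrable_const x)
    have i3 : Integrable (fun y : ℝ => a * (y - x)) ν := i2.const_mul a
    have hint : Integrable (fun y => φ y - φ x - a * (y - x)) ν := i1.sub i3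
    have hcalc : ∫ y, (φ y - φ x - a * (y - x)) ∂ν
        = (∫ y, φ y ∂ν) - φ x - a * ((∫ y, y ∂ν) - x) := by
      rw [integral_sub i1 i3,
        integral_sub (hφInt ν hν) (integrable_const (φ x)),
        integral_const_mul, integral_sub (hidInt ν hν) (integrable_const x),
        integral_const, integral_const]
      simp only [probReal_univ, ENNReal.toReal_one, one_smul, smul_eq_mul, one_mul]
    have hbig : Integrable (fun y : ℝ => L * (2^α * (|x|^(1+α) + |y|^(1+α)))) ν :=
      (((integrable_const (|x|^(1+α))).add (hmomInt ν hν)).const_mul (2^α)).const_mul L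
    have hstep : |∫ y, (φ y - φ x - a * (y - x)) ∂ν|
        ≤ ∫ y, (L * (2^α * (|x|^(1+α) + |y|^(1+α)))) ∂ν := by
      have h1 : |∫ y, (φ y - φ x - a * (y - x)) ∂ν| ≤ ∫ y, |φ y - φ x - a * (y - x)| ∂ν := by
        simpa [Real.norm_eq_abs] using norm_integral_le_integral_norm (μ := ν)
          (fun y => φ y - φ x - a * (y - x))
      refine h1.trans (integral_mono hint.abs hbig fun y => ?_)
      calc |φ y - φ x - a * (y - x)| ≤ L * |y - x| ^ (1+α) := taylor x y
        _ ≤ L * (2^α * (|x|^(1+α) + |y|^(1+α))) := mul_le_mul_of_nonneg_left (pow_split x y) hL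
    have hcomp : ∫ y, (L * (2^α * (|x|^(1+α) + |y|^(1+α)))) ∂ν
        = L * (2^α * (|x|^(1+α) + ∫ y, |y|^(1+α) ∂ν)) := by
      rw [integral_const_mul, integral_const_mul,
        integral_add (integrable_const (|x|^(1+α))) (hmomInt ν hν), integral_const]
      simp [measure_univ]
    rw [hcalc, hcomp] at hstep
    have hmono : L * (2^α * (|x|^(1+α) + ∫ y, |y|^(1+α) ∂ν)) ≤ L * 2^α * (|x|^(1+α) + M) := by
      have h6 := mul_le_mul_of_nonneg_left
        (add_le_add_right (momle ν hν) (|x|^(1+α))) (mul_nonneg hL h2a)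
      calc L * (2^α * (|x|^(1+α) + ∫ y, |y|^(1+α) ∂ν))
          = L * 2^α * (|x|^(1+α) + ∫ y, |y|^(1+α) ∂ν) := by ring
        _ ≤ L * 2^α * (|x|^(1+α) + M) := h6
    linarith
  -- boundedness of ∫ φ over Θ, hence ∫φ dν ≤ ∫φ dμ
  have phiBdd : BddAbove ((fun ν => ∫ x, φ x ∂ν) '' Θ) := by
    refine ⟨φ 0 + |deriv φ 0| * (1 + M) + L * 2^α * (|(0:ℝ)|^(1+α) + M), ?_⟩
    rintro b ⟨ν, hν, rfl⟩
    have h1 := (abs_le.mp (key ν hν 0)).2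
    have h2 := mbound ν hν
    have h3 : deriv φ 0 * ((∫ y, y ∂ν) - 0) ≤ |deriv φ 0| * (1 + M) := by
      calc deriv φ 0 * ((∫ y, y ∂ν) - 0) ≤ |deriv φ 0 * ((∫ y, y ∂ν) - 0)| := le_abs_self _
        _ = |deriv φ 0| * |(∫ y, y ∂ν) - 0| := abs_mul _ _
        _ ≤ |deriv φ 0| * (1+M) := mul_le_mul_of_nonneg_left (by simpa using h2) (abs_nonneg _)
    simp only at h1 ⊢
    linarith
  have philess : ∀ ν ∈ Θ, ∫ y, φ y ∂ν ≤ ∫ y, φ y ∂μ := by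
    intro ν hν; rw [hattain]; exact le_csSup phiBdd ⟨ν, hν, rfl⟩
  -- integrability of deriv φ
  have dbound : ∀ x:ℝ, |deriv φ x| ≤ (|deriv φ 0| + L) + L * |x|^(1+α) := by
    intro x
    have h1 : |deriv φ x - deriv φ 0| ≤ L * |x - 0|^α := hHolder x 0
    rw [sub_zero] at h1
    have h2 : |x|^α ≤ 1 + |x|^(1+α) := by
      rcases le_or_gt (|x|) 1 with h | h
      · have := Real.rpow_le_one (abs_nonneg x) h hα.le
        have h0 : (0:ℝ) ≤ |x|^(1+α) := Real.rpow_nonneg (abs_nonneg _) _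
        linarith
      · have := Real.rpow_le_rpow_of_exponent_le h.le (show α ≤ 1+α by linarith)
        linarith
    have h3 := abs_sub_abs_le_abs_sub (deriv φ x) (deriv φ 0)
    have h4 : L * |x|^α ≤ L * (1 + |x|^(1+α)) := mul_le_mul_of_nonneg_left h2 hL
    nlinarith
  have derivInt : Integrable (fun x => deriv φ x) μ := by
    refine Integrable.mono' ((integrable_const (|deriv φ 0| + L)).add ((hmomInt μ hμ).const_mul L))
      hdc.aestronglyMeasurable (Filter.Eventually.of_forall fun x => ?_)
    rw [Real.norm_eq_abs]; exact dbound x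
  -- final constant comparison
  have h2α : (2:ℝ)^α ≤ 2 := by
    calc (2:ℝ)^α ≤ (2:ℝ)^(1:ℝ) := Real.rpow_le_rpow_of_exponent_le one_le_two hα1
      _ = 2 := Real.rpow_one 2
  have h2a : (0:ℝ) ≤ 2^α := Real.rpow_nonneg (by norm_num) _
  have hfinal : L * 2^α * ((∫ x, |x|^(1+α) ∂μ) + M) ≤ 4 * L * M := by
    have h1 := momle μ hμ
    calc L * 2^α * ((∫ x, |x|^(1+α) ∂μ) + M) ≤ L * 2^α * (2*M) :=
          mul_le_mul_of_nonneg_left (by linarith) (mul_nonneg hL h2a)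
      _ ≤ L * 2 * (2*M) := by
          have hM2 : (0:ℝ) ≤ 2*M := by linarith
          exact mul_le_mul_of_nonneg_right (mul_le_mul_of_nonneg_left h2α hL) hM2
      _ = 4 * L * M := by ring
  rw [abs_le]
  constructor
  · -- lower bound : need  ∫ (p ∘ φ' - x φ') ≤ 4 L M
    have hIneg : -(∫ x, (x * deriv φ x - p (deriv φ x)) ∂μ)
        = ∫ x, (p (deriv φ x) - x * deriv φ x) ∂μ := by
      rw [← integral_neg]; congr 1; funext x; ring
    rw [neg_le, hIneg]
    refine le_of_forall_pos_le_add fun ε hε => ?_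
    set C := (∫ x, |deriv φ x| ∂μ) + 1 with hCdef
    have hC0 : 0 ≤ ∫ x, |deriv φ x| ∂μ := integral_nonneg fun x => abs_nonneg _
    have hCpos : 0 < C := by linarith
    set δ := ε / C with hδdef
    have hδpos : 0 < δ := div_pos hε hCpos
    have hmBddA : BddAbove ((fun ν => ∫ x, x ∂ν) '' Θ) := by
      refine ⟨1+M, ?_⟩
      rintro b ⟨ν, hν, rfl⟩
      exact (le_abs_self _).trans (mbound ν hν)
    have hmBddB : BddBelow ((fun ν => ∫ x, x ∂ν) '' Θ) := by
      refine ⟨-(1+M), ?_⟩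
      rintro b ⟨ν, hν, rfl⟩
      have := mbound ν hν
      have := neg_abs_le (∫ x, x ∂ν)
      linarith
    obtain ⟨b₁, hb₁mem, hb₁⟩ := exists_lt_of_lt_csSup (hne.image _)
      (show sSup ((fun ν => ∫ x, x ∂ν) '' Θ) - δ < sSup ((fun ν => ∫ x, x ∂ν) '' Θ) by linarith)
    obtain ⟨ν₁, hν₁, hb₁eq⟩ := hb₁mem
    obtain ⟨b₂, hb₂mem, hb₂⟩ := exists_lt_of_csInf_lt (hne.image _)
      (show sInf ((fun ν => ∫ x, x ∂ν) '' Θ) < sInf ((fun ν => ∫ x, x ∂ν) '' Θ) + δ by linarith)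
    obtain ⟨ν₂, hν₂, hb₂eq⟩ := hb₂mem
    have hub : ∀ ν ∈ Θ, ∫ x, x ∂ν ≤ (∫ x, x ∂ν₁) + δ := by
      intro ν hν
      have h1 := le_csSup hmBddA (⟨ν, hν, rfl⟩ : _ ∈ ((fun ν => ∫ x, x ∂ν) '' Θ))
      rw [← hb₁eq] at hb₁
      linarith
    have hlb : ∀ ν ∈ Θ, (∫ x, x ∂ν₂) - δ ≤ ∫ x, x ∂ν := by
      intro ν hν
      have h1 := csInf_le hmBddB (⟨ν, hν, rfl⟩ : _ ∈ ((fun ν => ∫ x, x ∂ν) '' Θ))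
      rw [← hb₂eq] at hb₂
      linarith
    -- pointwise bound
    have hpt : ∀ x, p (deriv φ x) - x * deriv φ x ≤
        ((∫ y, φ y ∂μ) - φ x) + L*2^α*(|x|^(1+α) + M) + δ * |deriv φ x| := by
      intro x
      set a := deriv φ x with hadef
      rcases le_or_gt 0 a with hage | halt
      · have hp1 : p a ≤ a * ((∫ x, x ∂ν₁) + δ) := by
          rw [hp a]
          refine csSup_le (hne.image _) ?_
          rintro b ⟨ν, hν, rfl⟩
          exact le_of_eq_of_le (integral_const_mul a fun x : ℝ => x)
            (mul_le_mul_of_nonneg_left (hub ν hν) hage)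
        have hk := (abs_le.mp (key ν₁ hν₁ x)).1
        rw [← hadef] at hk
        have h6 := philess ν₁ hν₁
        have h5 : δ * a ≤ δ * |a| := mul_le_mul_of_nonneg_left (le_abs_self a) hδpos.le
        have hr : a * ((∫ x, x ∂ν₁) + δ) - x * a
            = a * ((∫ y, y ∂ν₁) - x) + δ * a := by ring
        linarith
      · have hp1 : p a ≤ a * ((∫ x, x ∂ν₂) - δ) := by
          rw [hp a]
          refine csSup_le (hne.image _) ?_
          rintro b ⟨ν, hν, rfl⟩
          exact le_of_eq_of_le (integral_const_mul a fun x : ℝ => x)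
            (mul_le_mul_of_nonpos_left (hlb ν hν) halt.le)
        have hk := (abs_le.mp (key ν₂ hν₂ x)).1
        rw [← hadef] at hk
        have h6 := philess ν₂ hν₂
        have h5 : δ * (-a) ≤ δ * |a| := mul_le_mul_of_nonneg_left (neg_le_abs a) hδpos.le
        have hr : a * ((∫ x, x ∂ν₂) - δ) - x * a
            = a * ((∫ y, y ∂ν₂) - x) + δ * (-a) := by ring
        linarith
    have hLHSint : Integrable (fun x => p (deriv φ x) - x * deriv φ x) μ :=
      hInt.neg.congr (Filter.Eventually.of_forall fun x => by simp only [Pi.neg_apply]; ring)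
    have j1 : Integrable (fun x => (∫ y, φ y ∂μ) - φ x) μ := (integrable_const _).sub (hφInt μ hμ)
    have j2 : Integrable (fun x : ℝ => |x|^(1+α) + M) μ := (hmomInt μ hμ).add (integrable_const M)
    have j3 : Integrable (fun x : ℝ => L*2^α*(|x|^(1+α) + M)) μ := j2.const_mul (L*2^α)
    have hInt1 : Integrable (fun x => ((∫ y, φ y ∂μ) - φ x) + L*2^α*(|x|^(1+α) + M)) μ :=
      j1.add j3
    have j4 : Integrable (fun x => δ * |deriv φ x|) μ := derivInt.abs.const_mul δ
    have hRHSint : Integrable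
        (fun x => ((∫ y, φ y ∂μ) - φ x) + L*2^α*(|x|^(1+α) + M) + δ * |deriv φ x|) μ :=
      hInt1.add j4
    have hle := integral_mono hLHSint hRHSint hpt
    have hcomp : ∫ x, (((∫ y, φ y ∂μ) - φ x) + L*2^α*(|x|^(1+α) + M) + δ * |deriv φ x|) ∂μ
        = L*2^α*((∫ x, |x|^(1+α) ∂μ) + M) + δ * ∫ x, |deriv φ x| ∂μ := by
      rw [integral_add hInt1 j4, integral_add j1 j3,
        integral_sub (integrable_const _) (hφInt μ hμ), integral_const,
        integral_const_mul, integral_const_mul,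
        integral_add (hmomInt μ hμ) (integrable_const M), integral_const]
      simp only [probReal_univ, ENNReal.toReal_one, one_smul, smul_eq_mul, one_mul]
      ring
    rw [hcomp] at hle
    have hδC : δ * ∫ x, |deriv φ x| ∂μ ≤ ε := by
      have h1 : δ * ∫ x, |deriv φ x| ∂μ ≤ δ * C :=
        mul_le_mul_of_nonneg_left (by linarith) hδpos.le
      have h2 : δ * C = ε := div_mul_cancel₀ ε hCpos.ne'
      linarith
    linarith
  · -- upper bound
    have hm : ∀ x, x * deriv φ x - p (deriv φ x)
        ≤ (φ x - ∫ y, φ y ∂μ) + L*2^α*(|x|^(1+α) + M) := by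
      intro x
      set a := deriv φ x with hadef
      have hpBdd : BddAbove ((fun ν => ∫ x, a * x ∂ν) '' Θ) := by
        refine ⟨|a| * (1+M), ?_⟩
        rintro b ⟨ν, hν, rfl⟩
        refine le_of_eq_of_le (integral_const_mul a fun x : ℝ => x) ?_
        calc a * ∫ x, x ∂ν ≤ |a * ∫ x, x ∂ν| := le_abs_self _
          _ = |a| * |∫ x, x ∂ν| := abs_mul _ _
          _ ≤ |a| * (1+M) := mul_le_mul_of_nonneg_left (mbound ν hν) (abs_nonneg _)
      have hpge : a * (∫ y, y ∂μ) ≤ p a := by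
        rw [hp a]
        have : a * (∫ y, y ∂μ) = ∫ y, a * y ∂μ := (integral_const_mul a _).symm
        rw [this]
        exact le_csSup hpBdd ⟨μ, hμ, rfl⟩
      have hk := (abs_le.mp (key μ hμ x)).2
      rw [← hadef] at hk
      have hr : x * a - a * (∫ y, y ∂μ) = -(a * ((∫ y, y ∂μ) - x)) := by ring
      linarith
    have k1 : Integrable (fun x => φ x - ∫ y, φ y ∂μ) μ := (hφInt μ hμ).sub (integrable_const _)
    have k2 : Integrable (fun x : ℝ => |x|^(1+α) + M) μ := (hmomInt μ hμ).add (integrable_const M)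
    have k3 : Integrable (fun x : ℝ => L*2^α*(|x|^(1+α) + M)) μ := k2.const_mul (L*2^α)
    have hRHS1 : Integrable (fun x => (φ x - ∫ y, φ y ∂μ) + L*2^α*(|x|^(1+α) + M)) μ :=
      k1.add k3
    have hle := integral_mono hInt hRHS1 hm
    have hcomp1 : ∫ x, ((φ x - ∫ y, φ y ∂μ) + L*2^α*(|x|^(1+α) + M)) ∂μ
        = L*2^α*((∫ x, |x|^(1+α) ∂μ) + M) := by
      rw [integral_add k1 k3,
        integral_sub (hφInt μ hμ) (integrable_const _), integral_const,
        integral_const_mul, integral_add (hmomInt μ hμ) (integrable_const M), integral_const]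
      simp only [probReal_univ, ENNReal.toReal_one, one_smul, smul_eq_mul, one_mul]
      ring
    rw [hcomp1] at hle
    linarith
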